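/- On a probability space, let S_0, S_1, …, S_{t−1} be independent, identically distributed integrable random N×N real symmetric matrices, let ψ ∈ ℝ, and let D be a deterministic N×N real diagonal matrix. Let n_0, …, n_{t−1} be random vectors in ℝ^N, independent of the S_τ's and of each other, with E[n_τ] = 0 and E[n_τ n_τᵀ] = σ² I. Define w̃_0 = 0 and w̃_τ = ψ S_{τ−1} w̃_{τ−1} + (ψ S_{τ−1} − D) n_{τ−1} for τ ≥ 1, and let M_l = E[ Φ_{0:l−1}ᵀ Φ_{0:l−1} ] where Φ_{0:l−1} = S_{l−1} ⋯ S_0 (with M_0 = I). Assuming all the stated expectations exist, tr( E[w̃_t w̃_tᵀ] ) = σ² Σ_{τ=0}^{t−1} ψ^{2(t−τ−1)} tr( E[ (ψ S_0 − D)ᵀ M_{t−τ−1} (ψ S_0 − D) ] ), where the final expectation is over a single fresh copy S_0 of the common distribution. -/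

import Mathlib

open MeasureTheory ProbabilityTheory Matrix

/-- The (entrywise) measurable space structure on real matrices. -/
instance matMS {N : ℕ} : MeasurableSpace (Matrix (Fin N) (Fin N) ℝ) :=
  (inferInstance : MeasurableSpace (Fin N → Fin N → ℝ))

/-- Entrywise expectation of a random matrix. -/
noncomputable def mExp {Ω : Type} [MeasurableSpace Ω] {N : ℕ} (μ : Measure Ω)
    (X : Ω → Matrix (Fin N) (Fin N) ℝ) : Matrix (Fin N) (Fin N) ℝ :=
  Matrix.of fun i j => ∫ ω, X ω i j ∂μ

/-- The left-continued matrix product `Φ_{a:b−1} = S_{b−1} S_{b−2} ⋯ S_a`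
(equal to `I` when `b ≤ a`). -/
def phiProd {Ω : Type} {N : ℕ} (S : ℕ → Ω → Matrix (Fin N) (Fin N) ℝ) (a b : ℕ) (ω : Ω) :
    Matrix (Fin N) (Fin N) ℝ :=
  (((List.range (b - a)).reverse).map (fun j => S (a + j) ω)).prod

/-- Heterogeneous index type for the joint family of random matrices (`Sum.inl`) and
random vectors (`Sum.inr`). -/
def famType2 (N : ℕ) {ι κ : Type} : ι ⊕ κ → Type
  | Sum.inl _ => Matrix (Fin N) (Fin N) ℝ
  | Sum.inr _ => Fin N → ℝ

/-- Measurable space structures for the joint family. -/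
def famMS2 (N : ℕ) {ι κ : Type} : (i : ι ⊕ κ) → MeasurableSpace (famType2 N i)
  | Sum.inl _ => matMS
  | Sum.inr _ => (inferInstance : MeasurableSpace (Fin N → ℝ))

/-- The joint family: matrix `S t` at `Sum.inl t`, vector `n t` at `Sum.inr t`. -/
def fam2 {Ω : Type} {N : ℕ} {ι κ : Type} (S : ι → Ω → Matrix (Fin N) (Fin N) ℝ)
    (n : κ → Ω → Fin N → ℝ) : (i : ι ⊕ κ) → Ω → famType2 N i
  | Sum.inl t => S t
  | Sum.inr t => n t

section Aux
set_option linter.unusedSectionVars false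

variable {Ω : Type} [MeasurableSpace Ω] {N : ℕ}

/-- basic monomial in entries of the `S` matrices -/
def mon (S : ℕ → Ω → Matrix (Fin N) (Fin N) ℝ) (t : ℕ) (a b c d : ℕ → Fin N) (e f : ℕ → ℕ) :
    Ω → ℝ :=
  fun ω => ∏ ρ ∈ Finset.range t, (S ρ ω (a ρ) (b ρ)) ^ (e ρ) * (S ρ ω (c ρ) (d ρ)) ^ (f ρ)

/-- generators with a single entry-slot per matrix, support in `u` -/
def gen1 (S : ℕ → Ω → Matrix (Fin N) (Fin N) ℝ) (t : ℕ) (u : Finset ℕ) : Set (Ω → ℝ) :=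
  {F | ∃ a b e, (∀ ρ ∉ u, e ρ = 0) ∧ F = mon S t a b a b e (fun _ => 0)}

/-- generators with two entry-slots per matrix, support in `u` -/
def gen2 (S : ℕ → Ω → Matrix (Fin N) (Fin N) ℝ) (t : ℕ) (u : Finset ℕ) : Set (Ω → ℝ) :=
  {F | ∃ a b c d e f, (∀ ρ ∉ u, e ρ = 0 ∧ f ρ = 0) ∧ F = mon S t a b c d e f}

def V1 (S : ℕ → Ω → Matrix (Fin N) (Fin N) ℝ) (t : ℕ) (u : Finset ℕ) : Submodule ℝ (Ω → ℝ) :=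
  Submodule.span ℝ (gen1 S t u)

def V2 (S : ℕ → Ω → Matrix (Fin N) (Fin N) ℝ) (t : ℕ) (u : Finset ℕ) : Submodule ℝ (Ω → ℝ) :=
  Submodule.span ℝ (gen2 S t u)

variable {S : ℕ → Ω → Matrix (Fin N) (Fin N) ℝ} {t : ℕ} {u v : Finset ℕ}

lemma V1_mono (huv : u ⊆ v) : V1 S t u ≤ V1 S t v := by
  apply Submodule.span_mono
  rintro F ⟨a, b, e, he, rfl⟩
  exact ⟨a, b, e, fun ρ hρ => he ρ (fun h => hρ (huv h)), rfl⟩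

lemma V2_mono (huv : u ⊆ v) : V2 S t u ≤ V2 S t v := by
  apply Submodule.span_mono
  rintro F ⟨a, b, c, d, e, f, he, rfl⟩
  exact ⟨a, b, c, d, e, f, fun ρ hρ => he ρ (fun h => hρ (huv h)), rfl⟩

lemma one_mem_gen1 (hN : 0 < N) : (fun _ => (1:ℝ)) ∈ gen1 S t u := by
  refine ⟨fun _ => ⟨0, hN⟩, fun _ => ⟨0, hN⟩, fun _ => 0, fun _ _ => rfl, ?_⟩
  funext ω
  simp [mon]

lemma const_mem_V1 (hN : 0 < N) (r : ℝ) : (fun _ => r) ∈ V1 S t u := by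
  have : (fun _ : Ω => r) = r • (fun _ : Ω => (1:ℝ)) := by funext ω; simp
  rw [this]
  exact Submodule.smul_mem _ _ (Submodule.subset_span (one_mem_gen1 hN))

lemma entry_mem_V1 {ρ₀ : ℕ} (hρ₀ : ρ₀ < t) (i j : Fin N) :
    (fun ω => S ρ₀ ω i j) ∈ V1 S t {ρ₀} := by
  apply Submodule.subset_span
  refine ⟨fun _ => i, fun _ => j, fun ρ => if ρ = ρ₀ then 1 else 0, ?_, ?_⟩
  · intro ρ hρ
    simp only [Finset.mem_singleton] at hρ
    simp [hρ]
  · funext ω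
    simp only [mon]
    rw [Finset.prod_eq_single ρ₀]
    · simp
    · intro ρ _ hne; simp [hne]
    · intro h; exact absurd (Finset.mem_range.2 hρ₀) h

lemma V1_mul_V1_disj (h : Disjoint u v) : V1 S t u * V1 S t v ≤ V1 S t (u ∪ v) := by
  rw [V1, V1, Submodule.span_mul_span]
  apply Submodule.span_mono
  rintro X ⟨F, ⟨a, b, e, he, rfl⟩, G, ⟨a', b', e', he', rfl⟩, rfl⟩
  refine ⟨fun ρ => if ρ ∈ u then a ρ else a' ρ, fun ρ => if ρ ∈ u then b ρ else b' ρ,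
    e + e', ?_, ?_⟩
  · intro ρ hρ
    simp only [Finset.mem_union, not_or] at hρ
    simp [Pi.add_apply, he ρ hρ.1, he' ρ hρ.2]
  · funext ω
    show mon S t a b a b e _ ω * mon S t a' b' a' b' e' _ ω = _
    simp only [mon, ← Finset.prod_mul_distrib]
    apply Finset.prod_congr rfl
    intro ρ _
    by_cases hρ : ρ ∈ u
    · have : e' ρ = 0 := he' ρ (Finset.disjoint_left.1 h hρ)
      simp [hρ, this, pow_add]
    · have : e ρ = 0 := he ρ hρ
      simp [hρ, this, pow_add]

lemma V1_mul_V1 : V1 S t u * V1 S t v ≤ V2 S t (u ∪ v) := by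
  rw [V1, V1, Submodule.span_mul_span, V2]
  apply Submodule.span_mono
  rintro X ⟨F, ⟨a, b, e, he, rfl⟩, G, ⟨a', b', e', he', rfl⟩, rfl⟩
  refine ⟨a, b, a', b', e, e', ?_, ?_⟩
  · intro ρ hρ
    simp only [Finset.mem_union, not_or] at hρ
    exact ⟨he ρ hρ.1, he' ρ hρ.2⟩
  · funext ω
    show mon S t a b a b e _ ω * mon S t a' b' a' b' e' _ ω = _
    simp only [mon, ← Finset.prod_mul_distrib]
    apply Finset.prod_congr rfl
    intro ρ _
    ring

lemma V2_mul_V2_disj (h : Disjoint u v) : V2 S t u * V2 S t v ≤ V2 S t (u ∪ v) := by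
  rw [V2, V2, Submodule.span_mul_span, V2]
  apply Submodule.span_mono
  rintro X ⟨F, ⟨a, b, c, d, e, f, he, rfl⟩, G, ⟨a', b', c', d', e', f', he', rfl⟩, rfl⟩
  refine ⟨fun ρ => if ρ ∈ u then a ρ else a' ρ, fun ρ => if ρ ∈ u then b ρ else b' ρ,
    fun ρ => if ρ ∈ u then c ρ else c' ρ, fun ρ => if ρ ∈ u then d ρ else d' ρ,
    e + e', f + f', ?_, ?_⟩
  · intro ρ hρ
    simp only [Finset.mem_union, not_or] at hρ
    simp [Pi.add_apply, (he ρ hρ.1).1, (he ρ hρ.1).2, (he' ρ hρ.2).1, (he' ρ hρ.2).2]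
  · funext ω
    show mon S t a b c d e f ω * mon S t a' b' c' d' e' f' ω = _
    simp only [mon, ← Finset.prod_mul_distrib]
    apply Finset.prod_congr rfl
    intro ρ _
    by_cases hρ : ρ ∈ u
    · have h1 : e' ρ = 0 := (he' ρ (Finset.disjoint_left.1 h hρ)).1
      have h2 : f' ρ = 0 := (he' ρ (Finset.disjoint_left.1 h hρ)).2
      simp only [hρ, if_true, Pi.add_apply, h1, h2, add_zero, pow_zero, mul_one]
    · have h1 : e ρ = 0 := (he ρ hρ).1
      have h2 : f ρ = 0 := (he ρ hρ).2
      simp only [hρ, if_false, Pi.add_apply, h1, h2, zero_add, pow_zero, one_mul]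

end Aux
section Phi
set_option linter.unusedSectionVars false
variable {Ω : Type} [MeasurableSpace Ω] {N : ℕ}
variable {S : ℕ → Ω → Matrix (Fin N) (Fin N) ℝ} {t : ℕ} {u v : Finset ℕ}

lemma phiProd_le {a b : ℕ} (h : b ≤ a) (ω : Ω) : phiProd S a b ω = 1 := by
  simp [phiProd, Nat.sub_eq_zero_of_le h]

lemma phiProd_succ {a b : ℕ} (h : a ≤ b) (ω : Ω) :
    phiProd S a (b + 1) ω = S b ω * phiProd S a b ω := by
  have h1 : b + 1 - a = (b - a) + 1 := by omega
  have h2 : a + (b - a) = b := by omega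
  simp only [phiProd, h1, List.range_succ, List.reverse_append, List.reverse_cons,
    List.reverse_nil, List.nil_append, List.cons_append, List.map_cons, List.prod_cons, h2]

lemma phiProd_entry_mem_V1 (hN : 0 < N) {s l : ℕ} (hlt : s + l ≤ t) (i j : Fin N) :
    (fun ω => phiProd S s (s + l) ω i j) ∈ V1 S t (Finset.Ico s (s + l)) := by
  induction l generalizing i j with
  | zero =>
    have : (fun ω : Ω => phiProd S s (s + 0) ω i j) = fun _ : Ω => ((1 : Matrix (Fin N) (Fin N) ℝ) i j) := by
      funext ω; rw [phiProd_le (by omega)]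
    rw [this]
    exact const_mem_V1 hN _
  | succ l ih =>
    have key : (fun ω : Ω => phiProd S s (s + (l+1)) ω i j)
        = fun ω => ∑ k, S (s + l) ω i k * phiProd S s (s + l) ω k j := by
      funext ω
      have : s + (l + 1) = (s + l) + 1 := by omega
      rw [this, phiProd_succ (by omega), Matrix.mul_apply]
    have key2 : (fun ω : Ω => ∑ k, S (s + l) ω i k * phiProd S s (s + l) ω k j)
        = ∑ k : Fin N, (fun ω : Ω => S (s + l) ω i k * phiProd S s (s + l) ω k j) := by
      funext ω; simp
    rw [key, key2]
    apply Submodule.sum_mem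
    intro k _
    have hm : (fun ω : Ω => S (s + l) ω i k * phiProd S s (s + l) ω k j)
        ∈ V1 S t ({s + l} ∪ Finset.Ico s (s + l)) := by
      apply V1_mul_V1_disj (by simp [Finset.disjoint_left])
      exact Submodule.mul_mem_mul (entry_mem_V1 (by omega) i k) (ih (by omega) k j)
    refine V1_mono ?_ hm
    intro x hx
    simp only [Finset.mem_union, Finset.mem_singleton, Finset.mem_Ico] at hx ⊢
    omega
end Phi
section Indep
set_option linter.unusedSectionVars false
variable {Ω : Type} [MeasurableSpace Ω] {N : ℕ}
variable {S : ℕ → Ω → Matrix (Fin N) (Fin N) ℝ} {t : ℕ} {u v : Finset ℕ}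
variable {μ : Measure Ω} [IsProbabilityMeasure μ] {n : ℕ → Ω → Fin N → ℝ}

instance famMS2' {N : ℕ} {ι κ : Type} (i : ι ⊕ κ) : MeasurableSpace (famType2 N i) :=
  famMS2 N i

/-- the `inl`-side finset corresponding to `u ⊆ range t` -/
def sL (t : ℕ) (u : Finset ℕ) : Finset (Fin t ⊕ Fin t) :=
  (Finset.univ.filter (fun ρ : Fin t => (ρ:ℕ) ∈ u)).image Sum.inl

lemma mem_sL {τ : Fin t} : Sum.inl τ ∈ sL t u ↔ (τ:ℕ) ∈ u := by
  simp [sL]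

lemma not_mem_sL_inr {τ : Fin t} : Sum.inr τ ∉ sL t u := by
  simp [sL]

def getS {s : Finset (Fin t ⊕ Fin t)} (x : ∀ i : ↑s, famType2 N i.1) (τ : Fin t)
    (hm : Sum.inl τ ∈ s) : Matrix (Fin N) (Fin N) ℝ := x ⟨Sum.inl τ, hm⟩

def getN {s : Finset (Fin t ⊕ Fin t)} (x : ∀ i : ↑s, famType2 N i.1) (τ : Fin t)
    (hm : Sum.inr τ ∈ s) : Fin N → ℝ := x ⟨Sum.inr τ, hm⟩

lemma meas_getS_entry {s : Finset (Fin t ⊕ Fin t)} (τ : Fin t) (hm : Sum.inl τ ∈ s)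
    (a b : Fin N) : Measurable fun (x : ∀ i : ↑s, famType2 N i.1) => getS x τ hm a b := by
  have h1 : Measurable fun x : ∀ i : ↑s, famType2 N i.1 => x ⟨Sum.inl τ, hm⟩ :=
    measurable_pi_apply _
  exact (measurable_pi_apply b).comp ((measurable_pi_apply a).comp h1)

lemma meas_getN_entry {s : Finset (Fin t ⊕ Fin t)} (τ : Fin t) (hm : Sum.inr τ ∈ s)
    (a : Fin N) : Measurable fun (x : ∀ i : ↑s, famType2 N i.1) => getN x τ hm a := by
  have h1 : Measurable fun x : ∀ i : ↑s, famType2 N i.1 => x ⟨Sum.inr τ, hm⟩ :=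
    measurable_pi_apply _
  exact (measurable_pi_apply a).comp h1

lemma famF_meas (hmeas : ∀ τ < t, Measurable (S τ)) (hnmeas : ∀ τ < t, Measurable (n τ)) :
    ∀ i : Fin t ⊕ Fin t,
      Measurable (fam2 (fun τ : Fin t => S τ) (fun τ : Fin t => n τ) i) := by
  rintro (τ | τ)
  · exact hmeas τ τ.2
  · exact hnmeas τ τ.2

/-- a supported monomial factors measurably through the tuple of its variables -/
lemma mon_comp (s : Finset (Fin t ⊕ Fin t)) (hs : ∀ ρ : Fin t, (ρ:ℕ) ∈ u → Sum.inl ρ ∈ s)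
    (a b c d : ℕ → Fin N) (e f : ℕ → ℕ)
    (hsupp : ∀ ρ, ρ < t → ρ ∉ u → e ρ = 0 ∧ f ρ = 0) :
    ∃ ξ : (∀ i : ↑s, famType2 N i.1) → ℝ, Measurable ξ ∧
      mon S t a b c d e f = fun ω => ξ (fun i =>
        fam2 (fun τ : Fin t => S τ) (fun τ : Fin t => n τ) i.1 ω) := by
  classical
  refine ⟨fun x => ∏ ρ ∈ Finset.range t,
    (if hρ : ρ < t then
      (if hm : Sum.inl (⟨ρ, hρ⟩ : Fin t) ∈ s then
        (getS x ⟨ρ, hρ⟩ hm (a ρ) (b ρ)) ^ (e ρ) * (getS x ⟨ρ, hρ⟩ hm (c ρ) (d ρ)) ^ (f ρ)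
      else 1) else 1), ?_, ?_⟩
  · apply Finset.measurable_prod
    intro ρ _
    by_cases hρ : ρ < t
    · simp only [dif_pos hρ]
      by_cases hm : Sum.inl (⟨ρ, hρ⟩ : Fin t) ∈ s
      · simp only [dif_pos hm]
        exact ((meas_getS_entry _ hm (a ρ) (b ρ)).pow_const _).mul
          ((meas_getS_entry _ hm (c ρ) (d ρ)).pow_const _)
      · simp only [dif_neg hm]; exact measurable_const
    · simp only [dif_neg hρ]; exact measurable_const
  · funext ω
    simp only [mon]
    apply Finset.prod_congr rfl
    intro ρ hρ'
    have hρ : ρ < t := Finset.mem_range.1 hρ'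
    rw [dif_pos hρ]
    by_cases hmem : ρ ∈ u
    · rw [dif_pos (hs ⟨ρ, hρ⟩ hmem)]
      rfl
    · obtain ⟨h1, h2⟩ := hsupp ρ hρ hmem
      rw [h1, h2, pow_zero, pow_zero]
      by_cases hm : Sum.inl (⟨ρ, hρ⟩ : Fin t) ∈ s
      · rw [dif_pos hm]; simp
      · rw [dif_neg hm]; simp

end Indep
section Indep2
set_option linter.unusedSectionVars false
variable {Ω : Type} [MeasurableSpace Ω] {N : ℕ}
variable {S : ℕ → Ω → Matrix (Fin N) (Fin N) ℝ} {t : ℕ} {u v : Finset ℕ}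
variable {μ : Measure Ω} [IsProbabilityMeasure μ] {n : ℕ → Ω → Fin N → ℝ}

lemma factor_core
    (hIndep : iIndepFun (m := fun i : Fin t ⊕ Fin t => famMS2 N i)
      (fam2 (fun τ : Fin t => S τ) (fun τ : Fin t => n τ)) μ)
    (hmeas : ∀ τ < t, Measurable (S τ)) (hnmeas : ∀ τ < t, Measurable (n τ))
    {s sbar : Finset (Fin t ⊕ Fin t)} (hdisj : Disjoint s sbar)
    {X Y : Ω → ℝ}
    {ξ : (∀ i : ↑s, famType2 N i.1) → ℝ} (hξ : Measurable ξ)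
    (hX : X = fun ω => ξ (fun i => fam2 (fun τ : Fin t => S τ) (fun τ : Fin t => n τ) i.1 ω))
    {η : (∀ i : ↑sbar, famType2 N i.1) → ℝ} (hη : Measurable η)
    (hY : Y = fun ω => η (fun i => fam2 (fun τ : Fin t => S τ) (fun τ : Fin t => n τ) i.1 ω))
    (hXi : Integrable X μ) (hYi : Integrable Y μ) :
    ∫ ω, X ω * Y ω ∂μ = (∫ ω, X ω ∂μ) * ∫ ω, Y ω ∂μ := by
  have h0 := hIndep.indepFun_finset s sbar hdisj (famF_meas hmeas hnmeas)
  have h1 := h0.comp hξ hη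
  have h2 : IndepFun X Y μ := by rw [hX, hY]; exact h1
  have h3 := h2.integral_mul_eq_mul_integral hXi.1 hYi.1
  simpa [Pi.mul_apply] using h3

lemma disjoint_sL (huv : Disjoint u v) : Disjoint (sL t u) (sL t v) := by
  rw [Finset.disjoint_left]
  rintro (τ | τ) hx hx'
  · rw [mem_sL] at hx hx'
    exact Finset.disjoint_left.1 huv hx hx'
  · exact not_mem_sL_inr hx

lemma int_mon_mul_mon
    (hIndep : iIndepFun (m := fun i : Fin t ⊕ Fin t => famMS2 N i)
      (fam2 (fun τ : Fin t => S τ) (fun τ : Fin t => n τ)) μ)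
    (hmeas : ∀ τ < t, Measurable (S τ)) (hnmeas : ∀ τ < t, Measurable (n τ))
    (hIntS : ∀ (a b c d : ℕ → Fin N) (e f : ℕ → ℕ),
      Integrable (fun ω => ∏ τ ∈ Finset.range t,
        (S τ ω (a τ) (b τ)) ^ (e τ) * (S τ ω (c τ) (d τ)) ^ (f τ)) μ)
    (huv : Disjoint u v)
    (a b c d : ℕ → Fin N) (e f : ℕ → ℕ) (hsu : ∀ ρ ∉ u, e ρ = 0 ∧ f ρ = 0)
    (a' b' c' d' : ℕ → Fin N) (e' f' : ℕ → ℕ) (hsv : ∀ ρ ∉ v, e' ρ = 0 ∧ f' ρ = 0) :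
    ∫ ω, mon S t a b c d e f ω * mon S t a' b' c' d' e' f' ω ∂μ
      = (∫ ω, mon S t a b c d e f ω ∂μ) * ∫ ω, mon S t a' b' c' d' e' f' ω ∂μ := by
  obtain ⟨ξ, hξ, hXeq⟩ := mon_comp (n := n) (sL t u) (fun ρ h => mem_sL.2 h) a b c d e f (fun ρ _ h => hsu ρ h)
  obtain ⟨η, hη, hYeq⟩ := mon_comp (n := n) (sL t v) (fun ρ h => mem_sL.2 h) a' b' c' d' e' f' (fun ρ _ h => hsv ρ h)
  exact factor_core hIndep hmeas hnmeas (disjoint_sL huv) hξ hXeq hη hYeq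
    (hIntS a b c d e f) (hIntS a' b' c' d' e' f')

lemma int_mon_mul_nn
    (hIndep : iIndepFun (m := fun i : Fin t ⊕ Fin t => famMS2 N i)
      (fam2 (fun τ : Fin t => S τ) (fun τ : Fin t => n τ)) μ)
    (hmeas : ∀ τ < t, Measurable (S τ)) (hnmeas : ∀ τ < t, Measurable (n τ))
    (hIntS : ∀ (a b c d : ℕ → Fin N) (e f : ℕ → ℕ),
      Integrable (fun ω => ∏ τ ∈ Finset.range t,
        (S τ ω (a τ) (b τ)) ^ (e τ) * (S τ ω (c τ) (d τ)) ^ (f τ)) μ)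
    (hIntSn2 : ∀ (p q : ℕ) (i j : Fin N) (a b c d : ℕ → Fin N) (e f : ℕ → ℕ),
      Integrable (fun ω => (∏ τ ∈ Finset.range t,
        (S τ ω (a τ) (b τ)) ^ (e τ) * (S τ ω (c τ) (d τ)) ^ (f τ)) * (n p ω i * n q ω j)) μ)
    {p : ℕ} (hp : p < t) (i j : Fin N)
    (a b c d : ℕ → Fin N) (e f : ℕ → ℕ) :
    ∫ ω, mon S t a b c d e f ω * (n p ω i * n p ω j) ∂μ
      = (∫ ω, mon S t a b c d e f ω ∂μ) * ∫ ω, n p ω i * n p ω j ∂μ := by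
  obtain ⟨ξ, hξ, hXeq⟩ := mon_comp (S := S) (n := n) (sL t (Finset.range t))
    (fun ρ h => mem_sL.2 h) a b c d e f (fun ρ hρ h => absurd (Finset.mem_range.2 hρ) h)
  have hm : Sum.inr (⟨p, hp⟩ : Fin t) ∈ ({Sum.inr ⟨p, hp⟩} : Finset (Fin t ⊕ Fin t)) :=
    Finset.mem_singleton_self _
  have hdisj : Disjoint (sL t (Finset.range t)) ({Sum.inr ⟨p, hp⟩} : Finset (Fin t ⊕ Fin t)) := by
    rw [Finset.disjoint_right]
    intro x hx
    rw [Finset.mem_singleton] at hx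
    subst hx
    exact not_mem_sL_inr
  have hYint : Integrable (fun ω => n p ω i * n p ω j) μ := by
    have h := hIntSn2 p p i j a b c d 0 0
    simpa using h
  refine factor_core hIndep hmeas hnmeas hdisj hξ hXeq
    (η := fun x => getN x ⟨p, hp⟩ hm i * getN x ⟨p, hp⟩ hm j)
    ((meas_getN_entry _ hm i).mul (meas_getN_entry _ hm j)) rfl
    (hIntS a b c d e f) hYint

lemma int_monn_mul_n
    (hIndep : iIndepFun (m := fun i : Fin t ⊕ Fin t => famMS2 N i)
      (fam2 (fun τ : Fin t => S τ) (fun τ : Fin t => n τ)) μ)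
    (hmeas : ∀ τ < t, Measurable (S τ)) (hnmeas : ∀ τ < t, Measurable (n τ))
    (hIntSn1 : ∀ (p : ℕ) (i : Fin N) (a b c d : ℕ → Fin N) (e f : ℕ → ℕ),
      Integrable (fun ω => (∏ τ ∈ Finset.range t,
        (S τ ω (a τ) (b τ)) ^ (e τ) * (S τ ω (c τ) (d τ)) ^ (f τ)) * n p ω i) μ)
    {p q : ℕ} (hp : p < t) (hq : q < t) (hpq : p ≠ q) (i j : Fin N)
    (a b c d : ℕ → Fin N) (e f : ℕ → ℕ) :
    ∫ ω, (mon S t a b c d e f ω * n q ω j) * n p ω i ∂μ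
      = (∫ ω, mon S t a b c d e f ω * n q ω j ∂μ) * ∫ ω, n p ω i ∂μ := by
  set s : Finset (Fin t ⊕ Fin t) := insert (Sum.inr ⟨q, hq⟩) (sL t (Finset.range t)) with hs
  obtain ⟨ξ, hξ, hXeq⟩ := mon_comp (S := S) (n := n) s
    (fun ρ h => Finset.mem_insert_of_mem (mem_sL.2 h)) a b c d e f
    (fun ρ hρ h => absurd (Finset.mem_range.2 hρ) h)
  have hmq : Sum.inr (⟨q, hq⟩ : Fin t) ∈ s := Finset.mem_insert_self _ _
  have hmp : Sum.inr (⟨p, hp⟩ : Fin t) ∈ ({Sum.inr ⟨p, hp⟩} : Finset (Fin t ⊕ Fin t)) :=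
    Finset.mem_singleton_self _
  have hdisj : Disjoint s ({Sum.inr ⟨p, hp⟩} : Finset (Fin t ⊕ Fin t)) := by
    rw [Finset.disjoint_right]
    intro x hx
    rw [Finset.mem_singleton] at hx
    subst hx
    rw [hs, Finset.mem_insert]
    rintro (h | h)
    · rw [Sum.inr.injEq] at h
      exact hpq (congrArg Fin.val h)
    · exact not_mem_sL_inr h
  have hXint : Integrable (fun ω => mon S t a b c d e f ω * n q ω j) μ :=
    hIntSn1 q j a b c d e f
  have hYint : Integrable (fun ω => n p ω i) μ := by
    have h := hIntSn1 p i a b c d 0 0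
    simpa using h
  refine factor_core hIndep hmeas hnmeas hdisj
    (ξ := fun x => ξ x * getN x ⟨q, hq⟩ hmq j)
    (hξ.mul (meas_getN_entry _ hmq j)) ?_
    (η := fun x => getN x ⟨p, hp⟩ hmp i)
    (meas_getN_entry _ hmp i) rfl hXint hYint
  funext ω
  rw [congrFun hXeq ω]
  rfl

end Indep2
section SpanLevel
set_option linter.unusedSectionVars false
variable {Ω : Type} [MeasurableSpace Ω] {N : ℕ}
variable {S : ℕ → Ω → Matrix (Fin N) (Fin N) ℝ} {t : ℕ} {u v : Finset ℕ}
variable {μ : Measure Ω} [IsProbabilityMeasure μ] {n : ℕ → Ω → Fin N → ℝ}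

lemma mul_mem_V2 (huv : Disjoint u v) {F G : Ω → ℝ} (hF : F ∈ V2 S t u) (hG : G ∈ V2 S t v) :
    (fun ω => F ω * G ω) ∈ V2 S t (u ∪ v) :=
  V2_mul_V2_disj huv (Submodule.mul_mem_mul hF hG)

lemma integrable_V2
    (hIntS : ∀ (a b c d : ℕ → Fin N) (e f : ℕ → ℕ),
      Integrable (fun ω => ∏ τ ∈ Finset.range t,
        (S τ ω (a τ) (b τ)) ^ (e τ) * (S τ ω (c τ) (d τ)) ^ (f τ)) μ)
    {F : Ω → ℝ} (hF : F ∈ V2 S t u) : Integrable F μ := by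
  induction hF using Submodule.span_induction with
  | mem F hgen => obtain ⟨a, b, c, d, e, f, hs, rfl⟩ := hgen; exact hIntS a b c d e f
  | zero => exact integrable_const (0 : ℝ)
  | add F G _ _ hF hG => exact hF.add hG
  | smul r F _ hF => exact hF.smul r

lemma integrable_V2_nn
    (hIntSn2 : ∀ (p q : ℕ) (i j : Fin N) (a b c d : ℕ → Fin N) (e f : ℕ → ℕ),
      Integrable (fun ω => (∏ τ ∈ Finset.range t,
        (S τ ω (a τ) (b τ)) ^ (e τ) * (S τ ω (c τ) (d τ)) ^ (f τ)) * (n p ω i * n q ω j)) μ)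
    (p q : ℕ) (i j : Fin N) {F : Ω → ℝ} (hF : F ∈ V2 S t u) :
    Integrable (fun ω => F ω * (n p ω i * n q ω j)) μ := by
  induction hF using Submodule.span_induction with
  | mem F hgen =>
    obtain ⟨a, b, c, d, e, f, hs, rfl⟩ := hgen
    exact hIntSn2 p q i j a b c d e f
  | zero => simp only [Pi.zero_apply, zero_mul]; exact integrable_const (0 : ℝ)
  | add F G _ _ hF hG =>
    simp only [Pi.add_apply, add_mul]
    exact hF.add hG
  | smul r F _ hF =>
    simp only [Pi.smul_apply, smul_eq_mul, mul_assoc]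
    exact hF.const_mul r

lemma V2_int_nn
    (hIndep : iIndepFun (m := fun i : Fin t ⊕ Fin t => famMS2 N i)
      (fam2 (fun τ : Fin t => S τ) (fun τ : Fin t => n τ)) μ)
    (hmeas : ∀ τ < t, Measurable (S τ)) (hnmeas : ∀ τ < t, Measurable (n τ))
    (hIntS : ∀ (a b c d : ℕ → Fin N) (e f : ℕ → ℕ),
      Integrable (fun ω => ∏ τ ∈ Finset.range t,
        (S τ ω (a τ) (b τ)) ^ (e τ) * (S τ ω (c τ) (d τ)) ^ (f τ)) μ)
    (hIntSn2 : ∀ (p q : ℕ) (i j : Fin N) (a b c d : ℕ → Fin N) (e f : ℕ → ℕ),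
      Integrable (fun ω => (∏ τ ∈ Finset.range t,
        (S τ ω (a τ) (b τ)) ^ (e τ) * (S τ ω (c τ) (d τ)) ^ (f τ)) * (n p ω i * n q ω j)) μ)
    {p : ℕ} (hp : p < t) (i j : Fin N) {F : Ω → ℝ} (hF : F ∈ V2 S t u) :
    ∫ ω, F ω * (n p ω i * n p ω j) ∂μ
      = (∫ ω, F ω ∂μ) * ∫ ω, n p ω i * n p ω j ∂μ := by
  induction hF using Submodule.span_induction with
  | mem F hgen =>
    obtain ⟨a, b, c, d, e, f, hs, rfl⟩ := hgen
    exact int_mon_mul_nn hIndep hmeas hnmeas hIntS hIntSn2 hp i j a b c d e f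
  | zero => simp
  | add F G hFm hGm hF hG =>
    simp only [Pi.add_apply, add_mul]
    rw [integral_add (integrable_V2_nn hIntSn2 p p i j hFm) (integrable_V2_nn hIntSn2 p p i j hGm),
      integral_add (integrable_V2 hIntS hFm) (integrable_V2 hIntS hGm), hF, hG]
    ring
  | smul r F hFm hF =>
    simp only [Pi.smul_apply, smul_eq_mul, mul_assoc]
    rw [integral_const_mul, integral_const_mul, hF]
    ring

lemma V2_int_cross
    (hIndep : iIndepFun (m := fun i : Fin t ⊕ Fin t => famMS2 N i)
      (fam2 (fun τ : Fin t => S τ) (fun τ : Fin t => n τ)) μ)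
    (hmeas : ∀ τ < t, Measurable (S τ)) (hnmeas : ∀ τ < t, Measurable (n τ))
    (hIntSn1 : ∀ (p : ℕ) (i : Fin N) (a b c d : ℕ → Fin N) (e f : ℕ → ℕ),
      Integrable (fun ω => (∏ τ ∈ Finset.range t,
        (S τ ω (a τ) (b τ)) ^ (e τ) * (S τ ω (c τ) (d τ)) ^ (f τ)) * n p ω i) μ)
    (hIntSn2 : ∀ (p q : ℕ) (i j : Fin N) (a b c d : ℕ → Fin N) (e f : ℕ → ℕ),
      Integrable (fun ω => (∏ τ ∈ Finset.range t,
        (S τ ω (a τ) (b τ)) ^ (e τ) * (S τ ω (c τ) (d τ)) ^ (f τ)) * (n p ω i * n q ω j)) μ)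
    (hn_mean : ∀ τ < t, ∀ i, ∫ ω, n τ ω i ∂μ = 0)
    {p q : ℕ} (hp : p < t) (hq : q < t) (hpq : p ≠ q) (i j : Fin N)
    {F : Ω → ℝ} (hF : F ∈ V2 S t u) :
    ∫ ω, F ω * (n p ω i * n q ω j) ∂μ = 0 := by
  induction hF using Submodule.span_induction with
  | mem F hgen =>
    obtain ⟨a, b, c, d, e, f, hs, rfl⟩ := hgen
    have h := int_monn_mul_n hIndep hmeas hnmeas hIntSn1 hp hq hpq i j a b c d e f
    rw [hn_mean p hp i, mul_zero] at h
    rw [← h]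
    congr 1
    funext ω
    ring
  | zero => simp
  | add F G hFm hGm hF hG =>
    simp only [Pi.add_apply, add_mul]
    rw [integral_add (integrable_V2_nn hIntSn2 p q i j hFm) (integrable_V2_nn hIntSn2 p q i j hGm),
      hF, hG, add_zero]
  | smul r F hFm hF =>
    simp only [Pi.smul_apply, smul_eq_mul, mul_assoc]
    rw [integral_const_mul, hF, mul_zero]

lemma V2_split
    (hIndep : iIndepFun (m := fun i : Fin t ⊕ Fin t => famMS2 N i)
      (fam2 (fun τ : Fin t => S τ) (fun τ : Fin t => n τ)) μ)
    (hmeas : ∀ τ < t, Measurable (S τ)) (hnmeas : ∀ τ < t, Measurable (n τ))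
    (hIntS : ∀ (a b c d : ℕ → Fin N) (e f : ℕ → ℕ),
      Integrable (fun ω => ∏ τ ∈ Finset.range t,
        (S τ ω (a τ) (b τ)) ^ (e τ) * (S τ ω (c τ) (d τ)) ^ (f τ)) μ)
    (huv : Disjoint u v)
    {F G : Ω → ℝ} (hF : F ∈ V2 S t u) (hG : G ∈ V2 S t v) :
    ∫ ω, F ω * G ω ∂μ = (∫ ω, F ω ∂μ) * ∫ ω, G ω ∂μ := by
  induction hF using Submodule.span_induction with
  | mem F hFgen =>
    induction hG using Submodule.span_induction with
    | mem G hGgen =>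
      obtain ⟨a, b, c, d, e, f, hs, rfl⟩ := hFgen
      obtain ⟨a', b', c', d', e', f', hs', rfl⟩ := hGgen
      exact int_mon_mul_mon hIndep hmeas hnmeas hIntS huv a b c d e f hs a' b' c' d' e' f' hs'
    | zero => simp
    | add G₁ G₂ hG1m hG2m h1 h2 =>
      simp only [Pi.add_apply, mul_add]
      rw [integral_add (integrable_V2 hIntS (mul_mem_V2 huv (Submodule.subset_span hFgen) hG1m))
          (integrable_V2 hIntS (mul_mem_V2 huv (Submodule.subset_span hFgen) hG2m)),
        integral_add (integrable_V2 hIntS hG1m) (integrable_V2 hIntS hG2m), h1, h2]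
      ring
    | smul r G₁ hGm h =>
      simp only [Pi.smul_apply, smul_eq_mul]
      have hrw : ∀ ω, F ω * (r * G₁ ω) = r * (F ω * G₁ ω) := fun ω => by ring
      simp only [hrw]
      rw [integral_const_mul, integral_const_mul, h]
      ring
  | zero => simp
  | add F₁ F₂ hF1m hF2m h1 h2 =>
    simp only [Pi.add_apply, add_mul]
    rw [integral_add (integrable_V2 hIntS (mul_mem_V2 huv hF1m hG))
        (integrable_V2 hIntS (mul_mem_V2 huv hF2m hG)),
      integral_add (integrable_V2 hIntS hF1m) (integrable_V2 hIntS hF2m), h1, h2]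
    ring
  | smul r F₁ hFm h =>
    simp only [Pi.smul_apply, smul_eq_mul, mul_assoc]
    rw [integral_const_mul, integral_const_mul, h]
    ring
end SpanLevel
section Shift
set_option linter.unusedSectionVars false
variable {Ω : Type} [MeasurableSpace Ω] {N : ℕ}
variable {S : ℕ → Ω → Matrix (Fin N) (Fin N) ℝ} {t : ℕ} {u v : Finset ℕ}
variable {μ : Measure Ω} [IsProbabilityMeasure μ] {n : ℕ → Ω → Fin N → ℝ}

lemma meas_entry (i k : Fin N) :
    Measurable fun mtx : Matrix (Fin N) (Fin N) ℝ => mtx i k := by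
  have h1 : Measurable fun mtx : Matrix (Fin N) (Fin N) ℝ => mtx i := measurable_pi_apply i
  exact (measurable_pi_apply k).comp h1

lemma Spair_mem {ρ : ℕ} (hρ : ρ < t) (i k i' k' : Fin N) :
    (fun ω => S ρ ω i k * S ρ ω i' k') ∈ V2 S t {ρ} := by
  have h2 : (fun ω => S ρ ω i k * S ρ ω i' k') ∈ V2 S t ({ρ} ∪ {ρ}) :=
    V1_mul_V1 (Submodule.mul_mem_mul (entry_mem_V1 hρ i k) (entry_mem_V1 hρ i' k'))
  rwa [Finset.union_self] at h2

lemma phi_pair_mem (hN : 0 < N) {s l : ℕ} (h : s + l ≤ t) (i m i' m' : Fin N) :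
    (fun ω => phiProd S s (s + l) ω i m * phiProd S s (s + l) ω i' m')
      ∈ V2 S t (Finset.Ico s (s + l)) := by
  have h2 := V1_mul_V1 (Submodule.mul_mem_mul
    (phiProd_entry_mem_V1 (S := S) (t := t) hN h i m) (phiProd_entry_mem_V1 (S := S) (t := t) hN h i' m'))
  rwa [Finset.union_self] at h2

lemma shift (hN : 0 < N)
    (hIndep : iIndepFun (m := fun i : Fin t ⊕ Fin t => famMS2 N i)
      (fam2 (fun τ : Fin t => S τ) (fun τ : Fin t => n τ)) μ)
    (hmeas : ∀ τ < t, Measurable (S τ)) (hnmeas : ∀ τ < t, Measurable (n τ))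
    (hIntS : ∀ (a b c d : ℕ → Fin N) (e f : ℕ → ℕ),
      Integrable (fun ω => ∏ τ ∈ Finset.range t,
        (S τ ω (a τ) (b τ)) ^ (e τ) * (S τ ω (c τ) (d τ)) ^ (f τ)) μ)
    (hid : ∀ τ < t, ∀ τ' < t, IdentDistrib (S τ) (S τ') μ μ) :
    ∀ (l s s' : ℕ), s + l ≤ t → s' + l ≤ t → ∀ i m i' m' : Fin N,
    ∫ ω, phiProd S s (s + l) ω i m * phiProd S s (s + l) ω i' m' ∂μ
      = ∫ ω, phiProd S s' (s' + l) ω i m * phiProd S s' (s' + l) ω i' m' ∂μ := by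
  intro l
  induction l with
  | zero =>
    intro s s' _ _ i m i' m'
    have h1 : ∀ (s₀ : ℕ) (ω : Ω), phiProd S s₀ s₀ ω = 1 :=
      fun s₀ ω => phiProd_le (by omega) ω
    simp [h1]
  | succ l ih =>
    intro s s' hs hs' i m i' m'
    have key : ∀ (s₀ : ℕ), s₀ + (l+1) ≤ t →
        ∫ ω, phiProd S s₀ (s₀ + (l+1)) ω i m * phiProd S s₀ (s₀ + (l+1)) ω i' m' ∂μ
        = ∑ k : Fin N, ∑ k' : Fin N,
            (∫ ω, S (s₀+l) ω i k * S (s₀+l) ω i' k' ∂μ) *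
            ∫ ω, phiProd S s₀ (s₀+l) ω k m * phiProd S s₀ (s₀+l) ω k' m' ∂μ := by
      intro s₀ h
      have hdisj : Disjoint ({s₀+l} : Finset ℕ) (Finset.Ico s₀ (s₀+l)) := by
        simp only [Finset.disjoint_singleton_left, Finset.mem_Ico]
        omega
      have hsummand : ∀ k k' : Fin N, Integrable (fun ω =>
          (S (s₀+l) ω i k * S (s₀+l) ω i' k') *
          (phiProd S s₀ (s₀+l) ω k m * phiProd S s₀ (s₀+l) ω k' m')) μ :=
        fun k k' => integrable_V2 hIntS
          (mul_mem_V2 hdisj (Spair_mem (by omega) i k i' k')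
            (phi_pair_mem hN (by omega) k m k' m'))
      have e1 : (fun ω => phiProd S s₀ (s₀+(l+1)) ω i m * phiProd S s₀ (s₀+(l+1)) ω i' m')
          = fun ω => ∑ k : Fin N, ∑ k' : Fin N,
              (S (s₀+l) ω i k * S (s₀+l) ω i' k') *
              (phiProd S s₀ (s₀+l) ω k m * phiProd S s₀ (s₀+l) ω k' m') := by
        funext ω
        have h1 : s₀ + (l+1) = (s₀+l)+1 := by omega
        rw [h1, phiProd_succ (by omega), Matrix.mul_apply, Matrix.mul_apply,
          Finset.sum_mul_sum]
        apply Finset.sum_congr rfl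
        intro k _
        apply Finset.sum_congr rfl
        intro k' _
        ring
      rw [e1, integral_finset_sum _ (fun k _ => integrable_finset_sum _
        (fun k' _ => hsummand k k'))]
      apply Finset.sum_congr rfl
      intro k _
      rw [integral_finset_sum _ (fun k' _ => hsummand k k')]
      apply Finset.sum_congr rfl
      intro k' _
      exact V2_split hIndep hmeas hnmeas hIntS hdisj
        (Spair_mem (by omega) i k i' k') (phi_pair_mem hN (by omega) k m k' m')
    rw [key s hs, key s' hs']
    apply Finset.sum_congr rfl
    intro k _
    apply Finset.sum_congr rfl
    intro k' _
    have hSS : ∫ ω, S (s+l) ω i k * S (s+l) ω i' k' ∂μ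
        = ∫ ω, S (s'+l) ω i k * S (s'+l) ω i' k' ∂μ := by
      have hident := (hid (s+l) (by omega) (s'+l) (by omega)).comp
        (u := fun mtx : Matrix (Fin N) (Fin N) ℝ => mtx i k * mtx i' k')
        ((meas_entry i k).mul (meas_entry i' k'))
      exact hident.integral_eq
    rw [hSS, ih s s' (by omega) (by omega) k m k' m']
end Shift
section WForm
set_option linter.unusedSectionVars false
variable {Ω : Type} [MeasurableSpace Ω] {N : ℕ}
variable {S : ℕ → Ω → Matrix (Fin N) (Fin N) ℝ} {t : ℕ}
variable {n : ℕ → Ω → Fin N → ℝ}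

lemma w_form (ψ : ℝ) (D : Matrix (Fin N) (Fin N) ℝ) (w : ℕ → Ω → Fin N → ℝ)
    (hw0 : ∀ ω, w 0 ω = 0)
    (hw : ∀ τ < t, ∀ ω, w (τ + 1) ω
      = (ψ • S τ ω).mulVec (w τ ω) + (ψ • S τ ω - D).mulVec (n τ ω)) :
    ∀ k, k ≤ t → ∀ ω, w k ω = ∑ τ ∈ Finset.range k,
      (ψ ^ (k - 1 - τ) • (phiProd S (τ+1) k ω * (ψ • S τ ω - D))).mulVec (n τ ω) := by
  intro k
  induction k with
  | zero => intro _ ω; simp [hw0 ω]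
  | succ k ih =>
    intro hk ω
    rw [hw k (by omega) ω, ih (by omega) ω]
    have hlin : (ψ • S k ω).mulVec (∑ τ ∈ Finset.range k,
        (ψ ^ (k - 1 - τ) • (phiProd S (τ+1) k ω * (ψ • S k ω - D) )).mulVec (n τ ω))
        = _ := rfl
    -- distribute mulVec over the sum
    have hdist : ∀ (A : Matrix (Fin N) (Fin N) ℝ) (g : ℕ → Fin N → ℝ),
        A.mulVec (∑ τ ∈ Finset.range k, g τ) = ∑ τ ∈ Finset.range k, A.mulVec (g τ) := by
      intro A g
      funext x
      rw [Finset.sum_apply]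
      simp only [Matrix.mulVec, dotProduct, Finset.sum_apply, Finset.mul_sum]
      rw [Finset.sum_comm]
    rw [hdist]
    rw [Finset.sum_range_succ]
    congr 1
    · apply Finset.sum_congr rfl
      intro τ hτ
      have hτk : τ < k := Finset.mem_range.1 hτ
      rw [Matrix.mulVec_mulVec]
      congr 1
      rw [Matrix.smul_mul, Matrix.mul_smul, smul_smul]
      have h1 : ψ * ψ ^ (k - 1 - τ) = ψ ^ (k + 1 - 1 - τ) := by
        rw [← pow_succ']
        congr 1
        omega
      rw [h1]
      congr 1
      rw [← Matrix.mul_assoc, ← phiProd_succ (by omega)]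
    · have h2 : phiProd S (k+1) (k+1) ω = 1 := phiProd_le (le_refl _) ω
      rw [h2]
      simp
end WForm
theorem stmt15 {Ω : Type} [MeasurableSpace Ω] (μ : Measure Ω) [IsProbabilityMeasure μ]
    {N : ℕ} (hN : 0 < N) (t : ℕ)
    (S : ℕ → Ω → Matrix (Fin N) (Fin N) ℝ) (n : ℕ → Ω → Fin N → ℝ)
    (hmeas : ∀ τ < t, Measurable (S τ)) (hnmeas : ∀ τ < t, Measurable (n τ))
    (hsymm : ∀ τ < t, ∀ ω, (S τ ω).IsSymm)
    (hS_int : ∀ τ < t, ∀ i j, Integrable (fun ω => S τ ω i j) μ)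
    (hid : ∀ τ < t, ∀ τ' < t, IdentDistrib (S τ) (S τ') μ μ)
    (hIndep : iIndepFun (m := fun i : Fin t ⊕ Fin t => famMS2 N i)
      (fam2 (fun τ : Fin t => S τ) (fun τ : Fin t => n τ)) μ)
    (ψ : ℝ) (D : Matrix (Fin N) (Fin N) ℝ) (hD : D.IsDiag) (σ : ℝ) (hσ : 0 ≤ σ)
    (hn_mean : ∀ τ < t, ∀ i, ∫ ω, n τ ω i ∂μ = 0)
    (hn_cov : ∀ τ < t, ∀ i j,
      ∫ ω, n τ ω i * n τ ω j ∂μ = σ ^ 2 * (1 : Matrix (Fin N) (Fin N) ℝ) i j)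
    -- all the expectations appearing in the computation exist:
    (hIntS : ∀ (a b c d : ℕ → Fin N) (e f : ℕ → ℕ),
      Integrable (fun ω => ∏ τ ∈ Finset.range t,
        (S τ ω (a τ) (b τ)) ^ (e τ) * (S τ ω (c τ) (d τ)) ^ (f τ)) μ)
    (hIntSn1 : ∀ (p : ℕ) (i : Fin N) (a b c d : ℕ → Fin N) (e f : ℕ → ℕ),
      Integrable (fun ω => (∏ τ ∈ Finset.range t,
        (S τ ω (a τ) (b τ)) ^ (e τ) * (S τ ω (c τ) (d τ)) ^ (f τ)) * n p ω i) μ)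
    (hIntSn2 : ∀ (p q : ℕ) (i j : Fin N) (a b c d : ℕ → Fin N) (e f : ℕ → ℕ),
      Integrable (fun ω => (∏ τ ∈ Finset.range t,
        (S τ ω (a τ) (b τ)) ^ (e τ) * (S τ ω (c τ) (d τ)) ^ (f τ)) * (n p ω i * n q ω j)) μ)
    (w : ℕ → Ω → Fin N → ℝ) (hw0 : ∀ ω, w 0 ω = 0)
    (hw : ∀ τ < t, ∀ ω, w (τ + 1) ω
      = (ψ • S τ ω).mulVec (w τ ω) + (ψ • S τ ω - D).mulVec (n τ ω))
    (M : ℕ → Matrix (Fin N) (Fin N) ℝ)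
    (hM : ∀ l, M l = mExp μ (fun ω => (phiProd S 0 l ω)ᵀ * phiProd S 0 l ω)) :
    (mExp μ (fun ω => vecMulVec (w t ω) (w t ω))).trace
      = σ ^ 2 * ∑ τ ∈ Finset.range t, ψ ^ (2 * (t - τ - 1)) *
          (mExp μ (fun ω =>
            (ψ • S 0 ω - D)ᵀ * M (t - τ - 1) * (ψ • S 0 ω - D))).trace := by
  classical
  set C : ℕ → Ω → Matrix (Fin N) (Fin N) ℝ :=
    fun τ ω => phiProd S (τ+1) t ω * (ψ • S τ ω - D) with hCdef
  -- entries of `ψ • S ρ - D` lie in V1 {ρ}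
  have hAentry : ∀ ρ, ρ < t → ∀ m k : Fin N,
      (fun ω => (ψ • S ρ ω - D) m k) ∈ V1 S t {ρ} := by
    intro ρ hρ m k
    have hfe : (fun ω => (ψ • S ρ ω - D) m k)
        = (ψ • (fun ω => S ρ ω m k) - fun _ => D m k : Ω → ℝ) := by
      funext ω
      simp [Matrix.sub_apply, Matrix.smul_apply, smul_eq_mul]
    rw [hfe]
    exact Submodule.sub_mem _ (Submodule.smul_mem _ ψ (entry_mem_V1 hρ m k))
      (const_mem_V1 hN _)
  have hApair : ∀ ρ, ρ < t → ∀ m k m' k' : Fin N,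
      (fun ω => (ψ • S ρ ω - D) m k * (ψ • S ρ ω - D) m' k') ∈ V2 S t {ρ} := by
    intro ρ hρ m k m' k'
    have h2 := V1_mul_V1 (Submodule.mul_mem_mul (hAentry ρ hρ m k) (hAentry ρ hρ m' k'))
    rwa [Finset.union_self] at h2
  -- entries of the phi product, general support
  have hphient : ∀ τ, τ < t → ∀ i m : Fin N,
      (fun ω => phiProd S (τ+1) t ω i m) ∈ V1 S t (Finset.Ico (τ+1) t) := by
    intro τ hτ i m
    have ht' : (τ+1) + (t-(τ+1)) = t := by omega
    have h := phiProd_entry_mem_V1 (S := S) (t := t) hN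
      (show (τ+1) + (t-(τ+1)) ≤ t by omega) i m
    rw [ht'] at h
    exact h
  -- entries of C lie in V1 (range t)
  have hCmem : ∀ τ, τ < t → ∀ i k : Fin N,
      (fun ω => C τ ω i k) ∈ V1 S t (Finset.range t) := by
    intro τ hτ i k
    have hexp : (fun ω => C τ ω i k)
        = ∑ m : Fin N, (fun ω => phiProd S (τ+1) t ω i m * (ψ • S τ ω - D) m k) := by
      funext ω
      rw [hCdef]
      simp only [Matrix.mul_apply, Finset.sum_apply]
    rw [hexp]
    apply Submodule.sum_mem
    intro m _
    have hdisj : Disjoint (Finset.Ico (τ+1) t) ({τ} : Finset ℕ) := by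
      simp [Finset.disjoint_right]
    have h2 : (fun ω => phiProd S (τ+1) t ω i m * (ψ • S τ ω - D) m k)
        ∈ V1 S t (Finset.Ico (τ+1) t ∪ {τ}) :=
      V1_mul_V1_disj hdisj (Submodule.mul_mem_mul (hphient τ hτ i m) (hAentry τ hτ m k))
    refine V1_mono ?_ h2
    intro x hx
    simp only [Finset.mem_union, Finset.mem_Ico, Finset.mem_singleton, Finset.mem_range] at hx ⊢
    omega
  have hFmem : ∀ τ, τ < t → ∀ τ', τ' < t → ∀ i k k' : Fin N,
      (fun ω => C τ ω i k * C τ' ω i k') ∈ V2 S t (Finset.range t) := by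
    intro τ hτ τ' hτ' i k k'
    have h2 := V1_mul_V1 (Submodule.mul_mem_mul (hCmem τ hτ i k) (hCmem τ' hτ' i k'))
    rwa [Finset.union_self] at h2
  -- expansion of w t
  have hwt : ∀ ω (i : Fin N), w t ω i
      = ∑ τ ∈ Finset.range t, ∑ k : Fin N, ψ^(t-1-τ) * (C τ ω i k * n τ ω k) := by
    intro ω i
    have h1 := w_form (t := t) ψ D w hw0 hw t (le_refl t) ω
    have h2 := congrFun h1 i
    rw [h2, Finset.sum_apply]
    apply Finset.sum_congr rfl
    intro τ _
    simp only [Matrix.mulVec, dotProduct, Matrix.smul_apply, smul_eq_mul, mul_assoc]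
    rfl
  -- integrability of the generic summand
  have hIntSummand : ∀ τ, τ < t → ∀ τ', τ' < t → ∀ (c : ℝ) (i k k' : Fin N),
      Integrable (fun ω => c * ((C τ ω i k * C τ' ω i k') * (n τ ω k * n τ' ω k'))) μ := by
    intro τ hτ τ' hτ' c i k k'
    exact (integrable_V2_nn hIntSn2 τ τ' k k' (hFmem τ hτ τ' hτ' i k k')).const_mul c
  -- step 1 : expand the integrand
  have hwt2 : ∀ ω (i : Fin N), w t ω i * w t ω i
      = ∑ τ ∈ Finset.range t, ∑ τ' ∈ Finset.range t, ∑ k : Fin N, ∑ k' : Fin N,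
        (ψ^(t-1-τ) * ψ^(t-1-τ')) * ((C τ ω i k * C τ' ω i k') * (n τ ω k * n τ' ω k')) := by
    intro ω i
    rw [hwt ω i, Finset.sum_mul_sum]
    apply Finset.sum_congr rfl
    intro τ _
    apply Finset.sum_congr rfl
    intro τ' _
    rw [Finset.sum_mul_sum]
    apply Finset.sum_congr rfl
    intro k _
    apply Finset.sum_congr rfl
    intro k' _
    ring
  have hInt1 : ∀ i : Fin N, ∫ ω, w t ω i * w t ω i ∂μ
      = ∑ τ ∈ Finset.range t, ∑ τ' ∈ Finset.range t, ∑ k : Fin N, ∑ k' : Fin N,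
        (ψ^(t-1-τ) * ψ^(t-1-τ')) *
          ∫ ω, (C τ ω i k * C τ' ω i k') * (n τ ω k * n τ' ω k') ∂μ := by
    intro i
    simp only [hwt2]
    rw [integral_finset_sum _ (fun τ hτ => integrable_finset_sum _ (fun τ' hτ' =>
      integrable_finset_sum _ (fun k _ => integrable_finset_sum _ (fun k' _ =>
        hIntSummand τ (Finset.mem_range.1 hτ) τ' (Finset.mem_range.1 hτ') _ i k k'))))]
    apply Finset.sum_congr rfl
    intro τ hτ
    rw [integral_finset_sum _ (fun τ' hτ' =>
      integrable_finset_sum _ (fun k _ => integrable_finset_sum _ (fun k' _ =>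
        hIntSummand τ (Finset.mem_range.1 hτ) τ' (Finset.mem_range.1 hτ') _ i k k')))]
    apply Finset.sum_congr rfl
    intro τ' hτ'
    rw [integral_finset_sum _ (fun k _ => integrable_finset_sum _ (fun k' _ =>
        hIntSummand τ (Finset.mem_range.1 hτ) τ' (Finset.mem_range.1 hτ') _ i k k'))]
    apply Finset.sum_congr rfl
    intro k _
    rw [integral_finset_sum _ (fun k' _ =>
        hIntSummand τ (Finset.mem_range.1 hτ) τ' (Finset.mem_range.1 hτ') _ i k k')]
    apply Finset.sum_congr rfl
    intro k' _
    rw [integral_const_mul]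
  -- step 2 : only the diagonal (τ = τ', k = k') survives
  have hInt2 : ∀ i : Fin N, ∫ ω, w t ω i * w t ω i ∂μ
      = ∑ τ ∈ Finset.range t, ∑ k : Fin N,
        (ψ^(t-1-τ) * ψ^(t-1-τ)) * (σ^2 * ∫ ω, C τ ω i k * C τ ω i k ∂μ) := by
    intro i
    rw [hInt1 i]
    apply Finset.sum_congr rfl
    intro τ hτ
    have hτt : τ < t := Finset.mem_range.1 hτ
    rw [Finset.sum_eq_single τ]
    · apply Finset.sum_congr rfl
      intro k _
      rw [Finset.sum_eq_single k]
      · have h := V2_int_nn hIndep hmeas hnmeas hIntS hIntSn2 hτt k k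
          (hFmem τ hτt τ hτt i k k)
        rw [hn_cov τ hτt k k, Matrix.one_apply_eq, mul_one] at h
        rw [h]
        ring
      · intro k' _ hk'
        have h := V2_int_nn hIndep hmeas hnmeas hIntS hIntSn2 hτt k k'
          (hFmem τ hτt τ hτt i k k')
        rw [hn_cov τ hτt k k', Matrix.one_apply_ne (Ne.symm hk'), mul_zero, mul_zero] at h
        rw [h, mul_zero]
      · intro hk
        exact absurd (Finset.mem_univ k) hk
    · intro τ' hτ'mem hτ'
      apply Finset.sum_eq_zero
      intro k _
      apply Finset.sum_eq_zero
      intro k' _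
      have h := V2_int_cross hIndep hmeas hnmeas hIntSn1 hIntSn2 hn_mean hτt
        (Finset.mem_range.1 hτ'mem) (Ne.symm hτ') k k' (hFmem τ hτt τ' (Finset.mem_range.1 hτ'mem) i k k')
      rw [h, mul_zero]
    · intro hτ'
      exact absurd hτ hτ'
  -- step 3 : the diagonal term
  have hDiag : ∀ τ, τ < t → ∑ i : Fin N, ∑ k : Fin N, ∫ ω, C τ ω i k * C τ ω i k ∂μ
      = (mExp μ (fun ω => (ψ • S 0 ω - D)ᵀ * M (t - τ - 1) * (ψ • S 0 ω - D))).trace := by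
    intro τ hτ
    set l := t - τ - 1 with hl
    have ht' : (τ+1) + l = t := by omega
    have h0t : 0 < t := by omega
    have hphipair : ∀ i m i' m' : Fin N,
        (fun ω => phiProd S (τ+1) t ω i m * phiProd S (τ+1) t ω i' m')
          ∈ V2 S t (Finset.Ico (τ+1) t) := by
      intro i m i' m'
      have h := phi_pair_mem (S := S) (t := t) hN (show (τ+1) + l ≤ t by omega) i m i' m'
      rw [ht'] at h
      exact h
    have hdisj : Disjoint (Finset.Ico (τ+1) t) ({τ} : Finset ℕ) := by
      simp [Finset.disjoint_right]
    have hφφAA_int : ∀ i m i' m' k : Fin N, Integrable (fun ω =>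
        (phiProd S (τ+1) t ω i m * phiProd S (τ+1) t ω i' m') *
        ((ψ • S τ ω - D) m k * (ψ • S τ ω - D) m' k)) μ :=
      fun i m i' m' k => integrable_V2 hIntS
        (mul_mem_V2 hdisj (hphipair i m i' m') (hApair τ hτ m k m' k))
    have hsh : ∀ i m i' m' : Fin N,
        ∫ ω, phiProd S (τ+1) t ω i m * phiProd S (τ+1) t ω i' m' ∂μ
          = ∫ ω, phiProd S 0 l ω i m * phiProd S 0 l ω i' m' ∂μ := by
      intro i m i' m'
      have h := shift hN hIndep hmeas hnmeas hIntS hid l (τ+1) 0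
        (by omega) (by omega) i m i' m'
      rw [ht', Nat.zero_add] at h
      exact h
    have hAsh : ∀ m k m' k' : Fin N,
        ∫ ω, (ψ • S τ ω - D) m k * (ψ • S τ ω - D) m' k' ∂μ
          = ∫ ω, (ψ • S 0 ω - D) m k * (ψ • S 0 ω - D) m' k' ∂μ := by
      intro m k m' k'
      have h1 : ∀ (m k : Fin N),
          Measurable (fun mtx : Matrix (Fin N) (Fin N) ℝ => (ψ • mtx - D) m k) := by
        intro m k
        have he : (fun mtx : Matrix (Fin N) (Fin N) ℝ => (ψ • mtx - D) m k)
            = fun mtx => ψ * mtx m k - D m k := by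
          funext mtx
          simp [Matrix.sub_apply, Matrix.smul_apply, smul_eq_mul]
        rw [he]
        exact ((meas_entry m k).const_mul ψ).sub measurable_const
      have hg : Measurable (fun mtx : Matrix (Fin N) (Fin N) ℝ =>
          (ψ • mtx - D) m k * (ψ • mtx - D) m' k') := (h1 m k).mul (h1 m' k')
      exact ((hid τ hτ 0 h0t).comp hg).integral_eq
    have hφ0_int : ∀ i m i' m' : Fin N,
        Integrable (fun ω => phiProd S 0 l ω i m * phiProd S 0 l ω i' m') μ := by
      intro i m i' m'
      have h := integrable_V2 hIntS
        (phi_pair_mem (S := S) (t := t) hN (show 0 + l ≤ t by omega) i m i' m')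
      rw [Nat.zero_add] at h
      exact h
    have hA0_int : ∀ m k m' k' : Fin N,
        Integrable (fun ω => (ψ • S 0 ω - D) m k * (ψ • S 0 ω - D) m' k') μ :=
      fun m k m' k' => integrable_V2 hIntS (hApair 0 h0t m k m' k')
    have hMent : ∀ m m' : Fin N, M l m m'
        = ∑ i : Fin N, ∫ ω, phiProd S 0 l ω i m * phiProd S 0 l ω i m' ∂μ := by
      intro m m'
      rw [hM l]
      show ∫ ω, ((phiProd S 0 l ω)ᵀ * phiProd S 0 l ω) m m' ∂μ = _
      have hent : ∀ ω, ((phiProd S 0 l ω)ᵀ * phiProd S 0 l ω) m m'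
          = ∑ i : Fin N, phiProd S 0 l ω i m * phiProd S 0 l ω i m' := by
        intro ω
        rw [Matrix.mul_apply]
        apply Finset.sum_congr rfl
        intro i _
        rw [Matrix.transpose_apply]
      simp only [hent]
      rw [integral_finset_sum _ (fun i _ => hφ0_int i m i m')]
    have hCC : ∀ i k : Fin N, ∫ ω, C τ ω i k * C τ ω i k ∂μ
        = ∑ m : Fin N, ∑ m' : Fin N,
            (∫ ω, phiProd S 0 l ω i m * phiProd S 0 l ω i m' ∂μ) *
            (∫ ω, (ψ • S 0 ω - D) m k * (ψ • S 0 ω - D) m' k ∂μ) := by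
      intro i k
      have he : ∀ ω, C τ ω i k * C τ ω i k
          = ∑ m : Fin N, ∑ m' : Fin N,
            (phiProd S (τ+1) t ω i m * phiProd S (τ+1) t ω i m') *
            ((ψ • S τ ω - D) m k * (ψ • S τ ω - D) m' k) := by
        intro ω
        rw [hCdef]
        simp only [Matrix.mul_apply]
        rw [Finset.sum_mul_sum]
        apply Finset.sum_congr rfl
        intro m _
        apply Finset.sum_congr rfl
        intro m' _
        ring
      simp only [he]
      rw [integral_finset_sum _ (fun m _ => integrable_finset_sum _
        (fun m' _ => hφφAA_int i m i m' k))]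
      apply Finset.sum_congr rfl
      intro m _
      rw [integral_finset_sum _ (fun m' _ => hφφAA_int i m i m' k)]
      apply Finset.sum_congr rfl
      intro m' _
      rw [V2_split hIndep hmeas hnmeas hIntS hdisj (hphipair i m i m')
        (hApair τ hτ m k m' k), hsh i m i m', hAsh m k m' k]
    have hRHS : (mExp μ (fun ω => (ψ • S 0 ω - D)ᵀ * M l * (ψ • S 0 ω - D))).trace
        = ∑ k : Fin N, ∑ m : Fin N, ∑ m' : Fin N, M l m m' *
            ∫ ω, (ψ • S 0 ω - D) m k * (ψ • S 0 ω - D) m' k ∂μ := by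
      rw [Matrix.trace]
      apply Finset.sum_congr rfl
      intro k _
      have hent : ∀ ω, ((ψ • S 0 ω - D)ᵀ * M l * (ψ • S 0 ω - D)) k k
          = ∑ m : Fin N, ∑ m' : Fin N, M l m m' *
              ((ψ • S 0 ω - D) m k * (ψ • S 0 ω - D) m' k) := by
        intro ω
        simp only [Matrix.mul_apply, Matrix.transpose_apply, Finset.sum_mul]
        rw [Finset.sum_comm]
        apply Finset.sum_congr rfl
        intro m _
        apply Finset.sum_congr rfl
        intro m' _
        ring
      show ∫ ω, ((ψ • S 0 ω - D)ᵀ * M l * (ψ • S 0 ω - D)) k k ∂μ = _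
      simp only [hent]
      refine (integral_finset_sum _ (fun m _ => integrable_finset_sum _
        (fun m' _ => (hA0_int m k m' k).const_mul _))).trans ?_
      apply Finset.sum_congr rfl
      intro m _
      refine (integral_finset_sum _ (fun m' _ => (hA0_int m k m' k).const_mul _)).trans ?_
      apply Finset.sum_congr rfl
      intro m' _
      rw [integral_const_mul]
    rw [hRHS]
    simp only [hCC, hMent]
    rw [Finset.sum_comm]
    apply Finset.sum_congr rfl
    intro k _
    rw [Finset.sum_comm]
    apply Finset.sum_congr rfl
    intro m _
    rw [Finset.sum_comm]
    apply Finset.sum_congr rfl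
    intro m' _
    rw [← Finset.sum_mul]
  -- final assembly
  have hLHS : (mExp μ (fun ω => vecMulVec (w t ω) (w t ω))).trace
      = ∑ i : Fin N, ∫ ω, w t ω i * w t ω i ∂μ := by
    rw [Matrix.trace]
    apply Finset.sum_congr rfl
    intro i _
    show ∫ ω, vecMulVec (w t ω) (w t ω) i i ∂μ = _
    simp only [Matrix.vecMulVec_apply]
  rw [hLHS]
  simp only [hInt2]
  rw [Finset.sum_comm, Finset.mul_sum]
  apply Finset.sum_congr rfl
  intro τ hτ
  have hτt : τ < t := Finset.mem_range.1 hτ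
  rw [← hDiag τ hτt]
  have hc : ψ^(t-1-τ) * ψ^(t-1-τ) = ψ^(2*(t-τ-1)) := by
    rw [← pow_add]
    congr 1
    omega
  calc ∑ i : Fin N, ∑ k : Fin N,
        ψ ^ (t - 1 - τ) * ψ ^ (t - 1 - τ) * (σ ^ 2 * ∫ ω, C τ ω i k * C τ ω i k ∂μ)
      = ∑ i : Fin N, ∑ k : Fin N,
        (σ ^ 2 * ψ ^ (2*(t-τ-1))) * ∫ ω, C τ ω i k * C τ ω i k ∂μ := by
        apply Finset.sum_congr rfl
        intro i _
        apply Finset.sum_congr rfl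
        intro k _
        rw [← hc]
        ring
    _ = (σ ^ 2 * ψ ^ (2*(t-τ-1))) * ∑ i : Fin N, ∑ k : Fin N,
          ∫ ω, C τ ω i k * C τ ω i k ∂μ := by
        rw [Finset.mul_sum]
        apply Finset.sum_congr rfl
        intro i _
        rw [Finset.mul_sum]
    _ = σ ^ 2 * (ψ ^ (2 * (t - τ - 1)) *
          ∑ i : Fin N, ∑ k : Fin N, ∫ ω, C τ ω i k * C τ ω i k ∂μ) := by ring
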